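/- The entropy of the sum of two i.i.d. Bernoulli(ε) variables (over the integers) is at least (3/2) times the binary entropy of ε: for every ε ∈ [0,1], negMulLog((1−ε)²) + negMulLog(2ε(1−ε)) + negMulLog(ε²) ≥ (3/2)·h(ε). Consequently the gain η = (h(ε) + H(f_2))/(2h(ε)) for computing f_1 = W_2 and f_2 = W_2 + W_3 from uncorrelated Bernoulli(ε) subfunctions is lower bounded by 1.25 for ε ∈ (0,1). -/

import Mathlib

open Real

lemma aux_lemA {t : ℝ} (ht : 0 ≤ t) (ht1 : t < 1) :
    log (1 + t) - log (1 - t) ≤ 2 * t / (1 - t ^ 2) := by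
  set f : ℝ → ℝ := fun x => 2 * x / (1 - x ^ 2) - (log (1 + x) - log (1 - x)) with hf
  have hd : ∀ x ∈ Set.Ioo (-1 : ℝ) 1, HasDerivAt f (4 * x ^ 2 / (1 - x ^ 2) ^ 2) x := by
    intro x hx
    have hx1 : (0:ℝ) < 1 + x := by linarith [hx.1]
    have hx2 : (0:ℝ) < 1 - x := by linarith [hx.2]
    have hx3 : (0:ℝ) < 1 - x ^ 2 := by nlinarith
    have d1 : HasDerivAt (fun y : ℝ => 2 * y / (1 - y ^ 2))
        ((2 * 1 * (1 - x ^ 2) - 2 * x * (-(↑2 * x ^ 1))) / (1 - x ^ 2) ^ 2) x :=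
      ((hasDerivAt_id x).const_mul 2).div ((hasDerivAt_pow 2 x).const_sub 1) hx3.ne'
    have d2 : HasDerivAt (fun y : ℝ => log (1 + y)) (1 / (1 + x)) x :=
      ((hasDerivAt_id x).const_add 1).log hx1.ne'
    have d3 : HasDerivAt (fun y : ℝ => log (1 - y)) (-1 / (1 - x)) x :=
      ((hasDerivAt_id x).const_sub 1).log hx2.ne'
    have := d1.sub (d2.sub d3)
    refine this.congr_deriv ?_
    field_simp
    ring
  have hmono : MonotoneOn f (Set.Icc 0 t) := by
    have hsub : Set.Icc (0:ℝ) t ⊆ Set.Ioo (-1 : ℝ) 1 := fun x hx =>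
      ⟨by linarith [hx.1], by linarith [hx.2]⟩
    have hdiff : DifferentiableOn ℝ f (Set.Icc 0 t) := fun x hx =>
      ((hd x (hsub hx)).differentiableAt.differentiableWithinAt)
    refine monotoneOn_of_deriv_nonneg (convex_Icc 0 t) hdiff.continuousOn
      (hdiff.mono interior_subset) ?_
    intro x hx
    rw [interior_Icc] at hx
    have hx' : x ∈ Set.Ioo (-1:ℝ) 1 := ⟨by linarith [hx.1], by linarith [hx.2]⟩
    rw [(hd x hx').deriv]
    positivity
  have h0 : f 0 ≤ f t := hmono (Set.left_mem_Icc.2 ht) (Set.right_mem_Icc.2 ht) ht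
  simp only [hf] at h0
  norm_num at h0
  linarith

lemma aux_lemB {t : ℝ} (ht : 0 ≤ t) (ht1 : t < 1) :
    (2 + t) * log (1 + t) + (2 - t) * log (1 - t) ≤ 0 := by
  set f : ℝ → ℝ := fun x => (2 + x) * log (1 + x) + (2 - x) * log (1 - x) with hf
  have hd : ∀ x ∈ Set.Ioo (0 : ℝ) 1, HasDerivAt f
      ((log (1 + x) - log (1 - x)) - 2 * x / (1 - x ^ 2)) x := by
    intro x hx
    have hx1 : (0:ℝ) < 1 + x := by linarith [hx.1]
    have hx2 : (0:ℝ) < 1 - x := by linarith [hx.2]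
    have d1 : HasDerivAt (fun y : ℝ => (2 + y) * log (1 + y))
        (1 * log (1 + x) + (2 + x) * (1 / (1 + x))) x :=
      ((hasDerivAt_id x).const_add 2).mul (((hasDerivAt_id x).const_add 1).log hx1.ne')
    have d2 : HasDerivAt (fun y : ℝ => (2 - y) * log (1 - y))
        (-1 * log (1 - x) + (2 - x) * (-1 / (1 - x))) x :=
      ((hasDerivAt_id x).const_sub 2).mul (((hasDerivAt_id x).const_sub 1).log hx2.ne')
    have hx3 : (0:ℝ) < 1 - x ^ 2 := by nlinarith
    have := d1.add d2
    refine this.congr_deriv ?_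
    field_simp
    ring
  have hanti : AntitoneOn f (Set.Icc 0 t) := by
    have hcont : ContinuousOn f (Set.Icc 0 t) := by
      apply ContinuousOn.add
      · exact (continuousOn_const.add continuousOn_id).mul
          ((continuousOn_const.add continuousOn_id).log (fun x hx => by
            have : (0:ℝ) ≤ x := hx.1; exact (by linarith : (0:ℝ) < 1 + x).ne'))
      · exact (continuousOn_const.sub continuousOn_id).mul
          ((continuousOn_const.sub continuousOn_id).log (fun x hx => by
            have h1 : x ≤ t := hx.2
            have : (0:ℝ) < 1 - x := by linarith
            exact this.ne'))
    have hdiff : DifferentiableOn ℝ f (interior (Set.Icc 0 t)) := by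
      rw [interior_Icc]
      exact fun x hx => ((hd x ⟨hx.1, by linarith [hx.2]⟩).differentiableAt.differentiableWithinAt)
    refine antitoneOn_of_deriv_nonpos (convex_Icc 0 t) hcont hdiff ?_
    intro x hx
    rw [interior_Icc] at hx
    have hx' : x ∈ Set.Ioo (0:ℝ) 1 := ⟨hx.1, by linarith [hx.2]⟩
    rw [(hd x hx').deriv]
    have := aux_lemA (le_of_lt hx'.1) hx'.2
    linarith
  have h0 : f t ≤ f 0 := hanti (Set.left_mem_Icc.2 ht) (Set.right_mem_Icc.2 ht) ht
  simp only [hf] at h0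
  norm_num at h0
  linarith

lemma aux_lemKey {t : ℝ} (ht : 0 ≤ t) (ht1 : t ≤ 1) :
    (1 + t) * log (1 + t) + (1 - t) * log (1 - t) ≤ 2 * log 2 * t ^ 2 := by
  set g : ℝ → ℝ := fun x => (1 + x) * log (1 + x) + (1 - x) * log (1 - x) with hg
  rcases eq_or_lt_of_le ht with h0 | h0
  · simp [← h0]
  have hgc : Continuous g := by
    have : g = fun x => -negMulLog (1 + x) + -negMulLog (1 - x) := by
      funext x; simp [hg, negMulLog]; ring
    rw [this]
    exact ((continuous_negMulLog.comp (by continuity)).neg).add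
      ((continuous_negMulLog.comp (by continuity)).neg)
  set M : ℝ → ℝ := fun x => g x / x ^ 2 with hM
  have hd : ∀ x ∈ Set.Ioo (0 : ℝ) 1, HasDerivAt M
      (((log (1 + x) - log (1 - x)) * x ^ 2 - g x * (↑2 * x ^ 1)) / (x ^ 2) ^ 2) x := by
    intro x hx
    have hx1 : (0:ℝ) < 1 + x := by linarith [hx.1]
    have hx2 : (0:ℝ) < 1 - x := by linarith [hx.2]
    have hx0 : x ≠ 0 := ne_of_gt hx.1
    have d1 : HasDerivAt (fun y : ℝ => (1 + y) * log (1 + y))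
        (1 * log (1 + x) + (1 + x) * (1 / (1 + x))) x :=
      ((hasDerivAt_id x).const_add 1).mul (((hasDerivAt_id x).const_add 1).log hx1.ne')
    have d2 : HasDerivAt (fun y : ℝ => (1 - y) * log (1 - y))
        (-1 * log (1 - x) + (1 - x) * (-1 / (1 - x))) x :=
      ((hasDerivAt_id x).const_sub 1).mul (((hasDerivAt_id x).const_sub 1).log hx2.ne')
    have dg : HasDerivAt g (log (1 + x) - log (1 - x)) x := by
      have := d1.add d2
      refine this.congr_deriv ?_
      field_simp
      ring
    exact dg.div (hasDerivAt_pow 2 x) (by positivity)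
  have hmono : MonotoneOn M (Set.Icc t 1) := by
    have hcont : ContinuousOn M (Set.Icc t 1) := by
      apply hgc.continuousOn.div (by fun_prop)
      intro x hx
      have : 0 < x := lt_of_lt_of_le h0 hx.1
      positivity
    have hdiff : DifferentiableOn ℝ M (interior (Set.Icc t 1)) := by
      rw [interior_Icc]
      exact fun x hx => ((hd x ⟨lt_of_lt_of_le h0 hx.1.le,
        hx.2⟩).differentiableAt.differentiableWithinAt)
    refine monotoneOn_of_deriv_nonneg (convex_Icc t 1) hcont hdiff ?_
    intro x hx
    rw [interior_Icc] at hx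
    have hx' : x ∈ Set.Ioo (0:ℝ) 1 := ⟨lt_of_lt_of_le h0 hx.1.le, hx.2⟩
    rw [(hd x hx').deriv]
    apply div_nonneg _ (by positivity)
    have hB := aux_lemB (le_of_lt hx'.1) hx'.2
    have hxpos := hx'.1
    have hid : (log (1 + x) - log (1 - x)) * x ^ 2 - g x * (↑2 * x ^ 1)
        = x * (-((2 + x) * log (1 + x) + (2 - x) * log (1 - x))) := by
      simp only [hg]; ring
    rw [hid]
    exact mul_nonneg hxpos.le (by linarith)
  have h1 : M t ≤ M 1 := hmono (Set.left_mem_Icc.2 ht1) (Set.right_mem_Icc.2 ht1) ht1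
  have hM1 : M 1 = 2 * log 2 := by
    simp [hM, hg]
    norm_num
  rw [hM1, hM] at h1
  have ht2 : (0:ℝ) < t ^ 2 := by positivity
  have := (div_le_iff₀ ht2).mp h1
  calc g t ≤ 2 * log 2 * t ^ 2 := by linarith [this]

lemma aux_entBound_half {ε : ℝ} (h0 : 0 < ε) (h1 : ε ≤ 1/2) :
    4 * log 2 * (ε * (1 - ε)) ≤ binEntropy ε := by
  have ht : (0:ℝ) ≤ 1 - 2*ε := by linarith
  have ht1 : 1 - 2*ε ≤ 1 := by linarith
  have hk := aux_lemKey ht ht1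
  have he1 : (0:ℝ) < 1 - ε := by linarith
  have e1 : (1 : ℝ) + (1 - 2*ε) = 2 * (1 - ε) := by ring
  have e2 : (1 : ℝ) - (1 - 2*ε) = 2 * ε := by ring
  rw [e1, e2] at hk
  rw [Real.log_mul two_ne_zero he1.ne', Real.log_mul two_ne_zero h0.ne'] at hk
  rw [binEntropy_eq_negMulLog_add_negMulLog_one_sub]
  simp only [negMulLog]
  nlinarith [hk]

lemma aux_entBound {ε : ℝ} (hε : ε ∈ Set.Icc (0:ℝ) 1) :
    4 * log 2 * (ε * (1 - ε)) ≤ binEntropy ε := by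
  obtain ⟨h0, h1⟩ := hε
  rcases eq_or_lt_of_le h0 with rfl | h0
  · simp
  rcases eq_or_lt_of_le h1 with rfl | h1
  · simp
  rcases le_or_gt ε (1/2) with hc | hc
  · exact aux_entBound_half h0 hc
  · have := aux_entBound_half (by linarith : (0:ℝ) < 1 - ε) (by linarith)
    rw [binEntropy_one_sub] at this
    calc 4 * log 2 * (ε * (1 - ε)) = 4 * log 2 * ((1-ε) * (1 - (1-ε))) := by ring
    _ ≤ binEntropy ε := this

/-- The entropy of the integer sum of two i.i.d. Bernoulli(ε) variables is at least
`(3/2)·h(ε)`; consequently the gain `η = (h(ε) + H(f_2))/(2h(ε))` is lower bounded by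
`1.25` for `ε ∈ (0,1)`. -/
theorem entropy_sum_two_bernoulli_ge :
    (∀ ε ∈ Set.Icc (0 : ℝ) 1,
      negMulLog ((1 - ε) ^ 2) + negMulLog (2 * ε * (1 - ε)) + negMulLog (ε ^ 2)
        ≥ (3 / 2) * binEntropy ε) ∧
    (∀ ε ∈ Set.Ioo (0 : ℝ) 1,
      (binEntropy ε +
          (negMulLog ((1 - ε) ^ 2) + negMulLog (2 * ε * (1 - ε)) + negMulLog (ε ^ 2)))
        / (2 * binEntropy ε) ≥ 1.25) := by
  have main : ∀ ε ∈ Set.Icc (0 : ℝ) 1,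
      negMulLog ((1 - ε) ^ 2) + negMulLog (2 * ε * (1 - ε)) + negMulLog (ε ^ 2)
        ≥ (3 / 2) * binEntropy ε := by
    intro ε hε
    obtain ⟨h0, h1⟩ := hε
    rcases eq_or_lt_of_le h0 with rfl | h0
    · simp [negMulLog]
    rcases eq_or_lt_of_le h1 with rfl | h1
    · simp [negMulLog]
    have he1 : (0:ℝ) < 1 - ε := by linarith
    have hB := aux_entBound ⟨h0.le, h1.le⟩
    have l1 : log ((1 - ε)^2) = 2 * log (1 - ε) := by
      rw [Real.log_pow]; norm_num
    have l2 : log (ε^2) = 2 * log ε := by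
      rw [Real.log_pow]; norm_num
    have l3 : log (2 * ε * (1 - ε)) = log 2 + log ε + log (1 - ε) := by
      rw [Real.log_mul (by positivity) he1.ne', Real.log_mul two_ne_zero h0.ne']
    rw [ge_iff_le, binEntropy_eq_negMulLog_add_negMulLog_one_sub]
    rw [binEntropy_eq_negMulLog_add_negMulLog_one_sub] at hB
    simp only [negMulLog, l1, l2, l3] at *
    nlinarith [hB]
  refine ⟨main, ?_⟩
  intro ε hε
  obtain ⟨h0, h1⟩ := hε
  have hpos : 0 < binEntropy ε := binEntropy_pos h0 h1
  have hm := main ε ⟨h0.le, h1.le⟩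
  rw [ge_iff_le, le_div_iff₀ (by linarith)]
  norm_num
  linarith
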